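/- In the setting of the previous statement, a coequalizer of the parallel pair (id, unfold) : (T, α) ⇉ (T, α) in the category of F-algebras exists if and only if b admits a relatively initial algebra; moreover, if q : T → μ(B) is such a coequalizer then μ(B) together with the ca-morphism q ∘ in is an algebra initial relative to b, and conversely. -/
import Mathlib


open CategoryTheory CategoryTheory.Limits

/-- `M` together with a ca-morphism `η : b.V ⟶ M.a` is an algebra initial
relative to the coalgebra `b`. -/
def RelativelyInitial {C : Type*} [Category C] {F : C ⥤ C}
    (b : Endofunctor.Coalgebra F) (M : Endofunctor.Algebra F)
    (η : b.V ⟶ M.a) : Prop :=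
  η = b.str ≫ F.map η ≫ M.str ∧
    ∀ (a : Endofunctor.Algebra F) (j : b.V ⟶ a.a),
      j = b.str ≫ F.map j ≫ a.str → ∃! g : M ⟶ a, η ≫ g.f = j

section aux

variable {C : Type*} [Category C] {F : C ⥤ C}
    (b : Endofunctor.Coalgebra F) (T : Endofunctor.Algebra F)
    (in' : b.V ⟶ T.a) (unfold : T ⟶ T)

/-- Composing with `unfold` turns an extension of `j` into an extension of
`b.str ≫ F.map j ≫ a.str`. -/
lemma unfold_comp_ext (hunfold : in' ≫ unfold.f = b.str ≫ F.map in' ≫ T.str)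
    {a : Endofunctor.Algebra F} (g : T ⟶ a) :
    in' ≫ (unfold ≫ g).f = b.str ≫ F.map (in' ≫ g.f) ≫ a.str := by
  have hg := g.h
  simp only [Endofunctor.Algebra.comp_f, F.map_comp]
  rw [← Category.assoc, hunfold]
  simp only [Category.assoc]
  rw [← hg]

end aux

/-- A coequalizer of `(id, unfold)` in the category of `F`-algebras exists iff
`b` has a relatively initial algebra; a coequalizer `q : T ⟶ M` makes
`(M, q.f ∘ in')` relatively initial for `b`, and conversely every relatively
initial algebra arises as such a coequalizer. -/
theorem coequalizer_iff_relatively_initial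
    {C : Type*} [Category C] (F : C ⥤ C)
    (b : Endofunctor.Coalgebra F) (T : Endofunctor.Algebra F)
    (in' : b.V ⟶ T.a)
    (free : ∀ (a : Endofunctor.Algebra F) (j : b.V ⟶ a.a),
      ∃! g : T ⟶ a, in' ≫ g.f = j)
    (unfold : T ⟶ T)
    (hunfold : in' ≫ unfold.f = b.str ≫ F.map in' ≫ T.str) :
    ((∃ (M : Endofunctor.Algebra F) (q : T ⟶ M)
        (hq : 𝟙 T ≫ q = unfold ≫ q), Nonempty (IsColimit (Cofork.ofπ q hq))) ↔
      (∃ (M : Endofunctor.Algebra F) (η : b.V ⟶ M.a), RelativelyInitial b M η))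
    ∧ (∀ (M : Endofunctor.Algebra F) (q : T ⟶ M) (hq : 𝟙 T ≫ q = unfold ≫ q),
        Nonempty (IsColimit (Cofork.ofπ q hq)) →
          RelativelyInitial b M (in' ≫ q.f))
    ∧ (∀ (M : Endofunctor.Algebra F) (η : b.V ⟶ M.a),
        RelativelyInitial b M η →
          ∃ (q : T ⟶ M) (hq : 𝟙 T ≫ q = unfold ≫ q),
            Nonempty (IsColimit (Cofork.ofπ q hq)) ∧ in' ≫ q.f = η) := by
  -- forward construction
  have fwd : ∀ (M : Endofunctor.Algebra F) (q : T ⟶ M) (hq : 𝟙 T ≫ q = unfold ≫ q),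
      Nonempty (IsColimit (Cofork.ofπ q hq)) → RelativelyInitial b M (in' ≫ q.f) := by
    intro M q hq ⟨hc⟩
    have hq' : unfold ≫ q = q := by rw [← hq, Category.id_comp]
    constructor
    · -- η is a ca-morphism
      have := unfold_comp_ext b T in' unfold hunfold q
      rw [hq'] at this
      exact this
    · intro a j hj
      obtain ⟨g, hg, hgu⟩ := free a j
      have heq : unfold ≫ g = g := by
        apply hgu
        rw [unfold_comp_ext b T in' unfold hunfold g, hg, ← hj]
      -- g coequalizes, factor through coequalizer
      have hcoeq : 𝟙 T ≫ g = unfold ≫ g := by rw [Category.id_comp, heq]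
      obtain ⟨h, hh⟩ := Cofork.IsColimit.desc' hc g hcoeq
      simp only [Cofork.π_ofπ] at hh
      refine ⟨h, ?_, ?_⟩
      · have : in' ≫ (q ≫ h).f = j := by rw [hh]; exact hg
        simpa using this
      · intro h' hh'
        apply Cofork.IsColimit.hom_ext hc
        simp only [Cofork.π_ofπ, hh]
        apply hgu
        simpa using hh'
  -- backward construction
  have bwd : ∀ (M : Endofunctor.Algebra F) (η : b.V ⟶ M.a),
      RelativelyInitial b M η →
        ∃ (q : T ⟶ M) (hq : 𝟙 T ≫ q = unfold ≫ q),
          Nonempty (IsColimit (Cofork.ofπ q hq)) ∧ in' ≫ q.f = η := by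
    rintro M η ⟨hca, huniv⟩
    obtain ⟨q, hqf, hqu⟩ := free M η
    have hq : 𝟙 T ≫ q = unfold ≫ q := by
      rw [Category.id_comp]
      refine (hqu (unfold ≫ q) ?_).symm
      show in' ≫ (unfold ≫ q).f = η
      rw [unfold_comp_ext b T in' unfold hunfold q, hqf, ← hca]
    refine ⟨q, hq, ⟨?_⟩, hqf⟩
    have key : ∀ s : Cofork (𝟙 T) unfold,
        ∃! g : M ⟶ s.pt, η ≫ g.f = in' ≫ s.π.f := by
      intro s
      have hs : unfold ≫ s.π = s.π := by rw [← s.condition, Category.id_comp]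
      have hj : in' ≫ s.π.f = b.str ≫ F.map (in' ≫ s.π.f) ≫ s.pt.str := by
        conv_lhs => rw [← hs]
        exact unfold_comp_ext b T in' unfold hunfold s.π
      exact huniv s.pt _ hj
    refine Cofork.IsColimit.mk _ (fun s => (key s).choose) (fun s => ?_) (fun s m hm => ?_)
    · have h1 := (key s).choose_spec.1
      obtain ⟨u, huf, huu⟩ := free s.pt (in' ≫ s.π.f)
      have e1 : q ≫ (key s).choose = u := by
        apply huu
        rw [Endofunctor.Algebra.comp_f, ← Category.assoc, hqf, h1]
      have e2 : s.π = u := huu s.π rfl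
      simpa using e1.trans e2.symm
    · apply (key s).choose_spec.2
      simp only [Cofork.π_ofπ] at hm
      rw [← hqf, Category.assoc, ← Endofunctor.Algebra.comp_f, hm]
  exact ⟨⟨fun ⟨M, q, hq, hne⟩ => ⟨M, in' ≫ q.f, fwd M q hq hne⟩,
    fun ⟨M, η, h⟩ => ⟨M, (bwd M η h).choose, (bwd M η h).choose_spec.choose,
      (bwd M η h).choose_spec.choose_spec.1⟩⟩, fwd, bwd⟩
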